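/- In the 2-body Calogero–Moser system with $F_2 = p_1^2+p_2^2+2\nu^2/(q_1-q_2)^2$ and $K_{2,1} = (q_1 p_1 + q_2 p_2)(p_1+p_2) - (q_1+q_2) F_2$, the canonical Poisson bracket satisfies $\{F_2, K_{2,1}\} = 0$, i.e., $K_{2,1}$ is a constant of motion for the Hamiltonian $H^{(2)} = F_2/2$. -/

import Mathlib

/-- Canonical Poisson bracket of two functions of `(q₁, q₂, p₁, p₂)`. -/
noncomputable def pbr (f g : ℝ → ℝ → ℝ → ℝ → ℝ) (q₁ q₂ p₁ p₂ : ℝ) : ℝ :=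
    deriv (fun x => f x q₂ p₁ p₂) q₁ * deriv (fun x => g q₁ q₂ x p₂) p₁
  - deriv (fun x => f q₁ q₂ x p₂) p₁ * deriv (fun x => g x q₂ p₁ p₂) q₁
  + deriv (fun x => f q₁ x p₁ p₂) q₂ * deriv (fun x => g q₁ q₂ p₁ x) p₂
  - deriv (fun x => f q₁ q₂ p₁ x) p₂ * deriv (fun x => g q₁ x p₁ p₂) q₂

lemma hDr (c a x : ℝ) (h : x ≠ a) :
    HasDerivAt (fun x => c / (x - a) ^ 2) (-2 * c / (x - a) ^ 3) x := by
  have hx : x - a ≠ 0 := sub_ne_zero.mpr h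
  have h1 : HasDerivAt (fun x : ℝ => (x - a) ^ 2) (2 * (x - a)) x := by
    simpa using ((hasDerivAt_id x).sub_const a).fun_pow 2
  have := (hasDerivAt_const x c).fun_div h1 (pow_ne_zero 2 hx)
  refine this.congr_deriv ?_
  field_simp
  ring

lemma hDl (c a x : ℝ) (h : a ≠ x) :
    HasDerivAt (fun x => c / (a - x) ^ 2) (2 * c / (a - x) ^ 3) x := by
  have hx : a - x ≠ 0 := sub_ne_zero.mpr h
  have h1 : HasDerivAt (fun x : ℝ => (a - x) ^ 2) (-(2 * (a - x))) x := by
    simpa using ((hasDerivAt_id x).const_sub a).fun_pow 2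
  have := (hasDerivAt_const x c).fun_div h1 (pow_ne_zero 2 hx)
  refine this.congr_deriv ?_
  field_simp
  ring

/-- `{F₂, K₂₁} = 0`, i.e. `K₂₁` is a constant of motion of the
2-body Calogero–Moser Hamiltonian `H = F₂/2`. -/
theorem stmt6 (ν : ℝ) :
    ∀ q₁ q₂ p₁ p₂ : ℝ, q₁ ≠ q₂ →
      pbr (fun q₁ q₂ p₁ p₂ => p₁ ^ 2 + p₂ ^ 2 + 2 * ν ^ 2 / (q₁ - q₂) ^ 2)
          (fun q₁ q₂ p₁ p₂ =>
            (q₁ * p₁ + q₂ * p₂) * (p₁ + p₂)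
            - (q₁ + q₂) * (p₁ ^ 2 + p₂ ^ 2 + 2 * ν ^ 2 / (q₁ - q₂) ^ 2))
          q₁ q₂ p₁ p₂ = 0 := by
  intro q₁ q₂ p₁ p₂ hne
  have hne' : q₂ ≠ q₁ := hne.symm
  have hd : q₁ - q₂ ≠ 0 := sub_ne_zero.mpr hne
  -- derivatives of F
  have hFq1 : HasDerivAt (fun x => p₁ ^ 2 + p₂ ^ 2 + 2 * ν ^ 2 / (x - q₂) ^ 2)
      (-2 * (2 * ν ^ 2) / (q₁ - q₂) ^ 3) q₁ :=
    (hasDerivAt_const q₁ (p₁ ^ 2 + p₂ ^ 2)).add (hDr (2 * ν ^ 2) q₂ q₁ hne) |>.congr_deriv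
      (by ring)
  have hFq2 : HasDerivAt (fun x => p₁ ^ 2 + p₂ ^ 2 + 2 * ν ^ 2 / (q₁ - x) ^ 2)
      (2 * (2 * ν ^ 2) / (q₁ - q₂) ^ 3) q₂ :=
    (hasDerivAt_const q₂ (p₁ ^ 2 + p₂ ^ 2)).add (hDl (2 * ν ^ 2) q₁ q₂ hne) |>.congr_deriv
      (by ring)
  have hFp1 : HasDerivAt (fun x => x ^ 2 + p₂ ^ 2 + 2 * ν ^ 2 / (q₁ - q₂) ^ 2)
      (2 * p₁) p₁ := by
    simpa using ((hasDerivAt_pow 2 p₁).add_const (p₂ ^ 2)).add_const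
      (2 * ν ^ 2 / (q₁ - q₂) ^ 2)
  have hFp2 : HasDerivAt (fun x => p₁ ^ 2 + x ^ 2 + 2 * ν ^ 2 / (q₁ - q₂) ^ 2)
      (2 * p₂) p₂ := by
    simpa using (((hasDerivAt_pow 2 p₂).const_add (p₁ ^ 2)).add_const
      (2 * ν ^ 2 / (q₁ - q₂) ^ 2))
  -- derivatives of K
  have hKp1 : HasDerivAt (fun x =>
      (q₁ * x + q₂ * p₂) * (x + p₂)
        - (q₁ + q₂) * (x ^ 2 + p₂ ^ 2 + 2 * ν ^ 2 / (q₁ - q₂) ^ 2))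
      (q₁ * (p₁ + p₂) + (q₁ * p₁ + q₂ * p₂) - (q₁ + q₂) * (2 * p₁)) p₁ := by
    have h1 : HasDerivAt (fun x : ℝ => q₁ * x + q₂ * p₂) q₁ p₁ := by
      simpa using ((hasDerivAt_id p₁).const_mul q₁).add_const (q₂ * p₂)
    have h2 : HasDerivAt (fun x : ℝ => x + p₂) 1 p₁ := (hasDerivAt_id p₁).add_const p₂
    have h3 := h1.fun_mul h2
    have h4 : HasDerivAt (fun x : ℝ => x ^ 2 + p₂ ^ 2 + 2 * ν ^ 2 / (q₁ - q₂) ^ 2)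
        (2 * p₁) p₁ := hFp1
    have := h3.fun_sub (h4.const_mul (q₁ + q₂))
    refine this.congr_deriv ?_
    ring
  have hKp2 : HasDerivAt (fun x =>
      (q₁ * p₁ + q₂ * x) * (p₁ + x)
        - (q₁ + q₂) * (p₁ ^ 2 + x ^ 2 + 2 * ν ^ 2 / (q₁ - q₂) ^ 2))
      (q₂ * (p₁ + p₂) + (q₁ * p₁ + q₂ * p₂) - (q₁ + q₂) * (2 * p₂)) p₂ := by
    have h1 : HasDerivAt (fun x : ℝ => q₁ * p₁ + q₂ * x) q₂ p₂ := by
      simpa using (((hasDerivAt_id p₂).const_mul q₂).const_add (q₁ * p₁))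
    have h2 : HasDerivAt (fun x : ℝ => p₁ + x) 1 p₂ := by
      simpa using (hasDerivAt_id p₂).const_add p₁
    have := (h1.fun_mul h2).fun_sub (hFp2.const_mul (q₁ + q₂))
    refine this.congr_deriv ?_
    ring
  have hKq1 : HasDerivAt (fun x =>
      (x * p₁ + q₂ * p₂) * (p₁ + p₂)
        - (x + q₂) * (p₁ ^ 2 + p₂ ^ 2 + 2 * ν ^ 2 / (x - q₂) ^ 2))
      (p₁ * (p₁ + p₂)
        - ((p₁ ^ 2 + p₂ ^ 2 + 2 * ν ^ 2 / (q₁ - q₂) ^ 2)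
           + (q₁ + q₂) * (-2 * (2 * ν ^ 2) / (q₁ - q₂) ^ 3))) q₁ := by
    have h1 : HasDerivAt (fun x : ℝ => (x * p₁ + q₂ * p₂) * (p₁ + p₂))
        (p₁ * (p₁ + p₂)) q₁ := by
      simpa using (((hasDerivAt_id q₁).mul_const p₁).add_const (q₂ * p₂)).mul_const (p₁ + p₂)
    have h2 : HasDerivAt (fun x : ℝ => x + q₂) 1 q₁ := (hasDerivAt_id q₁).add_const q₂
    have := h1.fun_sub (h2.fun_mul hFq1)
    refine this.congr_deriv ?_
    ring
  have hKq2 : HasDerivAt (fun x =>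
      (q₁ * p₁ + x * p₂) * (p₁ + p₂)
        - (q₁ + x) * (p₁ ^ 2 + p₂ ^ 2 + 2 * ν ^ 2 / (q₁ - x) ^ 2))
      (p₂ * (p₁ + p₂)
        - ((p₁ ^ 2 + p₂ ^ 2 + 2 * ν ^ 2 / (q₁ - q₂) ^ 2)
           + (q₁ + q₂) * (2 * (2 * ν ^ 2) / (q₁ - q₂) ^ 3))) q₂ := by
    have h1 : HasDerivAt (fun x : ℝ => (q₁ * p₁ + x * p₂) * (p₁ + p₂))
        (p₂ * (p₁ + p₂)) q₂ := by
      simpa using ((((hasDerivAt_id q₂).mul_const p₂).const_add (q₁ * p₁)).mul_const (p₁ + p₂))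
    have h2 : HasDerivAt (fun x : ℝ => q₁ + x) 1 q₂ := by
      simpa using (hasDerivAt_id q₂).const_add q₁
    have := h1.fun_sub (h2.fun_mul hFq2)
    refine this.congr_deriv ?_
    ring
  rw [pbr, hFq1.deriv, hFq2.deriv, hFp1.deriv, hFp2.deriv, hKp1.deriv, hKp2.deriv,
    hKq1.deriv, hKq2.deriv]
  field_simp
  ring
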